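/- Let K be a strict bicategory with objects a and b and 1-cells f : b ⟶ a and u : a ⟶ b. A 2-cell ε : u ≫ f ⟶ 𝟙 a defines an absolute right lifting of the identity 1-cell 𝟙 a through f (with lift u) if and only if there exists a 2-cell η : 𝟙 b ⟶ f ≫ u such that η and ε satisfy the triangle identities, i.e., (η, ε) exhibit an adjunction f ⊣ u in K with unit η and counit ε. -/

import Mathlib

open CategoryTheory Bicategory

universe w v u

variable {K : Type u} [Bicategory.{w, v} K] [Bicategory.Strict K]

private lemma eqα {a b c d : K} (f : a ⟶ b) (g : b ⟶ c) (h : c ⟶ d) :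
    eqToHom (Bicategory.Strict.assoc f g h) = (α_ f g h).hom := by
  rw [Bicategory.Strict.associator_eqToIso]; rfl

private lemma eqα' {a b c d : K} (f : a ⟶ b) (g : b ⟶ c) (h : c ⟶ d) :
    eqToHom (Bicategory.Strict.assoc f g h).symm = (α_ f g h).inv := by
  rw [Bicategory.Strict.associator_eqToIso]; simp

private lemma eqLam {a b : K} (f : a ⟶ b) :
    eqToHom (Bicategory.Strict.id_comp f) = (λ_ f).hom := by
  rw [Bicategory.Strict.leftUnitor_eqToIso]; rfl

private lemma eqLam' {a b : K} (f : a ⟶ b) :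
    eqToHom (Bicategory.Strict.id_comp f).symm = (λ_ f).inv := by
  rw [Bicategory.Strict.leftUnitor_eqToIso]; simp

private lemma eqRho {a b : K} (f : a ⟶ b) :
    eqToHom (Bicategory.Strict.comp_id f) = (ρ_ f).hom := by
  rw [Bicategory.Strict.rightUnitor_eqToIso]; rfl

private lemma eqRho' {a b : K} (f : a ⟶ b) :
    eqToHom (Bicategory.Strict.comp_id f).symm = (ρ_ f).inv := by
  rw [Bicategory.Strict.rightUnitor_eqToIso]; simp

/-- In a strict bicategory `K`, the pair `(r, ρ)` is an absolute right lifting of `g` through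
`f` if every 2-cell `χ : b' ≫ f ⟶ c' ≫ g` factors uniquely through `ρ`. -/
def IsAbsoluteRightLifting {a b c : K} (f : b ⟶ a) (g : c ⟶ a) (r : c ⟶ b)
    (ρ : r ≫ f ⟶ g) : Prop :=
  ∀ (x : K) (b' : x ⟶ b) (c' : x ⟶ c) (χ : b' ≫ f ⟶ c' ≫ g),
    ∃! ζ : b' ⟶ c' ≫ r,
      χ = (ζ ▷ f) ≫ eqToHom (Bicategory.Strict.assoc c' r f) ≫ (c' ◁ ρ)

/-- A 2-cell `ε : u ≫ f ⟶ 𝟙 a` defines an absolute right lifting of the identity `𝟙 a`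
through `f` (with lift `u`) if and only if there is a unit `η : 𝟙 b ⟶ f ≫ u` so that
`(η, ε)` satisfy the triangle identities, i.e. exhibit an adjunction `f ⊣ u`. -/
theorem isAbsoluteRightLifting_id_iff_adjunction {a b : K} (f : b ⟶ a) (u : a ⟶ b)
    (ε₀ : u ≫ f ⟶ 𝟙 a) :
    IsAbsoluteRightLifting f (𝟙 a) u ε₀ ↔
      ∃ η : 𝟙 b ⟶ f ≫ u,
        (eqToHom (Bicategory.Strict.id_comp f).symm ≫ (η ▷ f) ≫
            eqToHom (Bicategory.Strict.assoc f u f) ≫ (f ◁ ε₀) ≫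
            eqToHom (Bicategory.Strict.comp_id f) = 𝟙 f) ∧
        (eqToHom (Bicategory.Strict.comp_id u).symm ≫ (u ◁ η) ≫
            eqToHom (Bicategory.Strict.assoc u f u).symm ≫ (ε₀ ▷ u) ≫
            eqToHom (Bicategory.Strict.id_comp u) = 𝟙 u) := by
  simp only [IsAbsoluteRightLifting, eqα, eqα', eqLam, eqLam', eqRho, eqRho']
  constructor
  · intro L
    obtain ⟨η, hη, -⟩ := L b (𝟙 b) f ((λ_ f).hom ≫ (ρ_ f).inv)
    have hη' : η ▷ f ≫ (α_ f u f).hom ≫ f ◁ ε₀ = (λ_ f).hom ≫ (ρ_ f).inv := hη.symm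
    refine ⟨η, ?_, ?_⟩
    · calc (λ_ f).inv ≫ η ▷ f ≫ (α_ f u f).hom ≫ f ◁ ε₀ ≫ (ρ_ f).hom
          = (λ_ f).inv ≫ (η ▷ f ≫ (α_ f u f).hom ≫ f ◁ ε₀) ≫ (ρ_ f).hom := by
            simp only [Category.assoc]
        _ = (λ_ f).inv ≫ ((λ_ f).hom ≫ (ρ_ f).inv) ≫ (ρ_ f).hom := by rw [hη']
        _ = 𝟙 f := by simp
    · obtain ⟨ζ, -, uniq⟩ := L a u (𝟙 a) (ε₀ ≫ (ρ_ (𝟙 a)).inv)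
      have hA : (λ_ u).inv = ζ := by
        apply uniq
        bicategory
      have hB : (ρ_ u).inv ≫ u ◁ η ≫ (α_ u f u).inv ≫ ε₀ ▷ u = ζ := by
        apply uniq
        calc ε₀ ≫ (ρ_ (𝟙 a)).inv
            = 𝟙 _ ⊗≫ u ◁ ((λ_ f).hom ≫ (ρ_ f).inv) ⊗≫ ε₀ ▷ 𝟙 a ⊗≫ 𝟙 _ := by
              bicategory
          _ = 𝟙 _ ⊗≫ u ◁ (η ▷ f ≫ (α_ f u f).hom ≫ f ◁ ε₀) ⊗≫ ε₀ ▷ 𝟙 a ⊗≫ 𝟙 _ := by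
              rw [hη']
          _ = 𝟙 _ ⊗≫ u ◁ (η ▷ f) ⊗≫ ((u ≫ f) ◁ ε₀ ≫ ε₀ ▷ 𝟙 a) ⊗≫ 𝟙 _ := by
              bicategory
          _ = 𝟙 _ ⊗≫ u ◁ (η ▷ f) ⊗≫ (ε₀ ▷ (u ≫ f) ≫ 𝟙 a ◁ ε₀) ⊗≫ 𝟙 _ := by
              rw [whisker_exchange]
          _ = ((ρ_ u).inv ≫ u ◁ η ≫ (α_ u f u).inv ≫ ε₀ ▷ u) ▷ f ≫
                (α_ (𝟙 a) u f).hom ≫ 𝟙 a ◁ ε₀ := by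
              bicategory
      have h2 : (ρ_ u).inv ≫ u ◁ η ≫ (α_ u f u).inv ≫ ε₀ ▷ u = (λ_ u).inv := by
        rw [hA, hB]
      calc (ρ_ u).inv ≫ u ◁ η ≫ (α_ u f u).inv ≫ ε₀ ▷ u ≫ (λ_ u).hom
          = ((ρ_ u).inv ≫ u ◁ η ≫ (α_ u f u).inv ≫ ε₀ ▷ u) ≫ (λ_ u).hom := by
            simp only [Category.assoc]
        _ = (λ_ u).inv ≫ (λ_ u).hom := by rw [h2]
        _ = 𝟙 u := by simp
  · rintro ⟨η, t1, t2⟩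
    have t1' : η ▷ f ≫ (α_ f u f).hom ≫ f ◁ ε₀ = (λ_ f).hom ≫ (ρ_ f).inv := by
      calc η ▷ f ≫ (α_ f u f).hom ≫ f ◁ ε₀
          = (λ_ f).hom ≫ ((λ_ f).inv ≫ η ▷ f ≫ (α_ f u f).hom ≫ f ◁ ε₀ ≫ (ρ_ f).hom) ≫
              (ρ_ f).inv := by simp
        _ = (λ_ f).hom ≫ 𝟙 f ≫ (ρ_ f).inv := by rw [t1]
        _ = (λ_ f).hom ≫ (ρ_ f).inv := by simp
    have t2' : u ◁ η ≫ (α_ u f u).inv ≫ ε₀ ▷ u = (ρ_ u).hom ≫ (λ_ u).inv := by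
      calc u ◁ η ≫ (α_ u f u).inv ≫ ε₀ ▷ u
          = (ρ_ u).hom ≫ ((ρ_ u).inv ≫ u ◁ η ≫ (α_ u f u).inv ≫ ε₀ ▷ u ≫ (λ_ u).hom) ≫
              (λ_ u).inv := by simp
        _ = (ρ_ u).hom ≫ 𝟙 u ≫ (λ_ u).inv := by rw [t2]
        _ = (ρ_ u).hom ≫ (λ_ u).inv := by simp
    intro x b' c' χ
    refine ⟨(ρ_ b').inv ≫ b' ◁ η ≫ (α_ b' f u).inv ≫ χ ▷ u ≫ (α_ c' (𝟙 a) u).hom ≫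
        c' ◁ (λ_ u).hom, Eq.symm ?_, ?_⟩
    · calc ((ρ_ b').inv ≫ b' ◁ η ≫ (α_ b' f u).inv ≫ χ ▷ u ≫ (α_ c' (𝟙 a) u).hom ≫
              c' ◁ (λ_ u).hom) ▷ f ≫ (α_ c' u f).hom ≫ c' ◁ ε₀
          = 𝟙 _ ⊗≫ b' ◁ (η ▷ f) ⊗≫ (χ ▷ (u ≫ f) ≫ (c' ≫ 𝟙 a) ◁ ε₀) ⊗≫ 𝟙 _ := by
            bicategory
        _ = 𝟙 _ ⊗≫ b' ◁ (η ▷ f) ⊗≫ ((b' ≫ f) ◁ ε₀ ≫ χ ▷ 𝟙 a) ⊗≫ 𝟙 _ := by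
            rw [← whisker_exchange]
        _ = 𝟙 _ ⊗≫ b' ◁ (η ▷ f ≫ (α_ f u f).hom ≫ f ◁ ε₀) ⊗≫ χ ▷ 𝟙 a ⊗≫ 𝟙 _ := by
            bicategory
        _ = 𝟙 _ ⊗≫ b' ◁ ((λ_ f).hom ≫ (ρ_ f).inv) ⊗≫ χ ▷ 𝟙 a ⊗≫ 𝟙 _ := by
            rw [t1']
        _ = χ := by bicategory
    · intro ζ' hζ'
      symm
      calc (ρ_ b').inv ≫ b' ◁ η ≫ (α_ b' f u).inv ≫ χ ▷ u ≫ (α_ c' (𝟙 a) u).hom ≫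
              c' ◁ (λ_ u).hom
          = 𝟙 _ ⊗≫ (b' ◁ η ≫ ζ' ▷ (f ≫ u)) ⊗≫ c' ◁ (ε₀ ▷ u) ⊗≫ 𝟙 _ := by
            rw [hζ']; bicategory
        _ = 𝟙 _ ⊗≫ (ζ' ▷ 𝟙 b ≫ (c' ≫ u) ◁ η) ⊗≫ c' ◁ (ε₀ ▷ u) ⊗≫ 𝟙 _ := by
            rw [whisker_exchange]
        _ = 𝟙 _ ⊗≫ ζ' ▷ 𝟙 b ⊗≫ c' ◁ (u ◁ η ≫ (α_ u f u).inv ≫ ε₀ ▷ u) ⊗≫ 𝟙 _ := by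
            bicategory
        _ = 𝟙 _ ⊗≫ ζ' ▷ 𝟙 b ⊗≫ c' ◁ ((ρ_ u).hom ≫ (λ_ u).inv) ⊗≫ 𝟙 _ := by
            rw [t2']
        _ = ζ' := by bicategory
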